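/- Let (Θ, F, π) be a probability space and let f₁, f₂, g₁, g₂ : Θ → ℝ be measurable functions bounded in absolute value by 1. Then |∫ f₁g₁ dπ + ∫ f₁g₂ dπ + ∫ f₂g₁ dπ - ∫ f₂g₂ dπ| ≤ 2. -/

import Mathlib

open MeasureTheory

theorem CHSH_inequality {Θ : Type*} [MeasurableSpace Θ]
    (π : Measure Θ) [IsProbabilityMeasure π]
    (f₁ f₂ g₁ g₂ : Θ → ℝ)
    (hf₁m : Measurable f₁) (hf₂m : Measurable f₂)
    (hg₁m : Measurable g₁) (hg₂m : Measurable g₂)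
    (hf₁ : ∀ θ, |f₁ θ| ≤ 1) (hf₂ : ∀ θ, |f₂ θ| ≤ 1)
    (hg₁ : ∀ θ, |g₁ θ| ≤ 1) (hg₂ : ∀ θ, |g₂ θ| ≤ 1) :
    |(∫ θ, f₁ θ * g₁ θ ∂π) + (∫ θ, f₁ θ * g₂ θ ∂π) +
      (∫ θ, f₂ θ * g₁ θ ∂π) - ∫ θ, f₂ θ * g₂ θ ∂π| ≤ 2 := by
  have key : ∀ (u v : Θ → ℝ) (hu : Measurable u) (hv : Measurable v)
      (hub : ∀ θ, |u θ| ≤ 1) (hvb : ∀ θ, |v θ| ≤ 1),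
      Integrable (fun θ => u θ * v θ) π := by
    intro u v hu hv hub hvb
    apply Integrable.mono' (integrable_const (1 : ℝ)) (hu.mul hv).aestronglyMeasurable
    filter_upwards with θ
    rw [Pi.mul_apply, norm_mul]
    calc ‖u θ‖ * ‖v θ‖ ≤ 1 * 1 := by
          exact mul_le_mul (hub θ) (hvb θ) (norm_nonneg _) zero_le_one
      _ = 1 := by ring
  have h11 := key f₁ g₁ hf₁m hg₁m hf₁ hg₁
  have h12 := key f₁ g₂ hf₁m hg₂m hf₁ hg₂
  have h21 := key f₂ g₁ hf₂m hg₁m hf₂ hg₁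
  have h22 := key f₂ g₂ hf₂m hg₂m hf₂ hg₂
  have ha : Integrable (fun θ => f₁ θ * g₁ θ + f₁ θ * g₂ θ) π := h11.add h12
  have hb : Integrable (fun θ => f₁ θ * g₁ θ + f₁ θ * g₂ θ + f₂ θ * g₁ θ) π := ha.add h21
  rw [← integral_add h11 h12, ← integral_add ha h21, ← integral_sub hb h22]
  calc |∫ θ, (f₁ θ * g₁ θ + f₁ θ * g₂ θ + f₂ θ * g₁ θ - f₂ θ * g₂ θ) ∂π|
      ≤ ∫ θ, |f₁ θ * g₁ θ + f₁ θ * g₂ θ + f₂ θ * g₁ θ - f₂ θ * g₂ θ| ∂π := by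
        simpa [Real.norm_eq_abs] using
          norm_integral_le_integral_norm (fun θ => f₁ θ * g₁ θ + f₁ θ * g₂ θ + f₂ θ * g₁ θ - f₂ θ * g₂ θ) (μ := π)
    _ ≤ ∫ _θ, (2 : ℝ) ∂π := by
        apply integral_mono_of_nonneg (Filter.Eventually.of_forall fun θ => abs_nonneg _)
          (integrable_const 2)
        filter_upwards with θ
        have habs : |g₁ θ + g₂ θ| + |g₁ θ - g₂ θ| ≤ 2 := by
          have h3 := abs_le.mp (hg₁ θ); have h4 := abs_le.mp (hg₂ θ)
          rcases abs_cases (g₁ θ + g₂ θ) with ⟨e1, _⟩ | ⟨e1, _⟩ <;>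
            rcases abs_cases (g₁ θ - g₂ θ) with ⟨e2, _⟩ | ⟨e2, _⟩ <;>
            rw [e1, e2] <;> linarith [h3.1, h3.2, h4.1, h4.2]
        have hrw : f₁ θ * g₁ θ + f₁ θ * g₂ θ + f₂ θ * g₁ θ - f₂ θ * g₂ θ
            = f₁ θ * (g₁ θ + g₂ θ) + f₂ θ * (g₁ θ - g₂ θ) := by ring
        rw [hrw]
        calc |f₁ θ * (g₁ θ + g₂ θ) + f₂ θ * (g₁ θ - g₂ θ)|
            ≤ |f₁ θ * (g₁ θ + g₂ θ)| + |f₂ θ * (g₁ θ - g₂ θ)| := abs_add_le _ _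
          _ = |f₁ θ| * |g₁ θ + g₂ θ| + |f₂ θ| * |g₁ θ - g₂ θ| := by rw [abs_mul, abs_mul]
          _ ≤ 1 * |g₁ θ + g₂ θ| + 1 * |g₁ θ - g₂ θ| :=
              add_le_add (mul_le_mul_of_nonneg_right (hf₁ θ) (abs_nonneg _))
                (mul_le_mul_of_nonneg_right (hf₂ θ) (abs_nonneg _))
          _ ≤ 2 := by rw [one_mul, one_mul]; exact habs
    _ = 2 := by simp
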